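/- Let (ℓ_1,k_1),…,(ℓ_m,k_m) be pairs of integers such that for every j either ℓ_j ≠ 0 and ℓ_j divides k_j(k_j−1), or (ℓ_j,k_j) = (0,1); and let f : ℤ^m → ℤ be any function. Then for every finite coloring ℤ = C_1 ∪ … ∪ C_r there exist injective sequences of integers (x^{(j)}_n)_{n=1}^∞ for j = 1,…,m, with (x^{(j)}_n) = (x^{(j')}_n) whenever (ℓ_j,k_j) = (ℓ_{j'},k_{j'}), and a color C_i such that {f(x^{(1)}_{F_1},…,x^{(m)}_{F_m}) : F_1 < … < F_m} ⊆ C_i, where F_1,…,F_m range over nonempty finite subsets of ℕ with max F_j < min F_{j+1}, and for F = {n_1<…<n_s} one sets x^{(j)}_F = 𝔖_{ℓ_j,k_j}(x^{(j)}_{n_1},…,x^{(j)}_{n_s}). -/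

import Mathlib

/-- The value of the (ℓ,k)-symmetric polynomial 𝔖_{ℓ,k} on the family (x i)_{i ∈ F}:
𝔖_{ℓ,k} = Σ_{∅≠G⊆F} ℓ^{|G|−1} k^{|F|−|G|} ∏_{i∈G} x i + (k^{|F|} − k)/ℓ.
(For (ℓ,k) = (0,1) this formula yields the finite sum Σ_{i∈F} x i, in accordance with
the convention 𝔖_{0,1}(a₁,…,aₙ) = a₁ + … + aₙ.) -/
def symVal (l k : ℤ) (x : ℕ → ℤ) (F : Finset ℕ) : ℤ :=
  (∑ G ∈ F.powerset.filter (fun G => G ≠ ∅),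
      l ^ (G.card - 1) * k ^ (F.card - G.card) * ∏ i ∈ G, x i)
    + (k ^ F.card - k) / l



namespace MT15

open Filter

def OPa (l k a b : ℤ) : ℤ := l * a * b + k * (a + b) + (k * k - k) / l

lemma OPa_assoc (l k : ℤ) (h : l ∣ k * k - k) (a b c : ℤ) :
    OPa l k (OPa l k a b) c = OPa l k a (OPa l k b c) := by
  have hc := Int.mul_ediv_cancel' h
  unfold OPa
  linear_combination (c - a) * hc

lemma psi_OPa (l k : ℤ) (h : l ∣ k * k - k) (a b : ℤ) :
    l * OPa l k a b + k = (l * a + k) * (l * b + k) := by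
  have hc := Int.mul_ediv_cancel' h
  unfold OPa
  linear_combination hc

def starSet (o : ℤ → ℤ → ℤ) (u : Ultrafilter ℤ) (B : Set ℤ) : Set ℤ :=
  {x | x ∈ B ∧ {y | o x y ∈ B} ∈ u}

lemma symVal_congr (l k : ℤ) (x y : ℕ → ℤ) (F : Finset ℕ) (h : ∀ i ∈ F, x i = y i) :
    symVal l k x F = symVal l k y F := by
  unfold symVal
  congr 1
  refine Finset.sum_congr rfl (fun G hG => ?_)
  simp only [Finset.mem_filter, Finset.mem_powerset] at hG
  rw [Finset.prod_congr rfl (fun i hi => h i (hG.1 hi))]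

lemma filter_powerset_singleton (n : ℕ) :
    ({n} : Finset ℕ).powerset.filter (fun G => G ≠ ∅) = {{n}} := by
  ext G
  simp only [Finset.mem_filter, Finset.mem_powerset, Finset.subset_singleton_iff,
    Finset.mem_singleton]
  constructor
  · rintro ⟨h | h, h2⟩
    · exact absurd h h2
    · exact h
  · rintro rfl
    exact ⟨Or.inr rfl, Finset.singleton_ne_empty n⟩

lemma symVal_singleton (l k : ℤ) (x : ℕ → ℤ) (n : ℕ) : symVal l k x {n} = x n := by
  unfold symVal
  rw [filter_powerset_singleton]
  simp

lemma dvd_pow_sub (l k : ℤ) (h : l ∣ k * k - k) : ∀ n : ℕ, 1 ≤ n → l ∣ k ^ n - k := by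
  intro n hn
  induction n with
  | zero => omega
  | succ n ih =>
    rcases Nat.eq_or_lt_of_le hn with h1 | h1
    · simp [← h1]
    · have h2 := ih (by omega)
      have h3 : k ^ (n+1) - k = k * (k ^ n - k) + (k * k - k) := by ring
      rw [h3]
      exact dvd_add (Dvd.dvd.mul_left h2 k) h

lemma psi_symVal (l k : ℤ) (x : ℕ → ℤ) (F : Finset ℕ) (h : l ∣ k * k - k)
    (hF : F.Nonempty) :
    l * symVal l k x F + k = ∏ i ∈ F, (l * x i + k) := by
  have hdvd : l ∣ k ^ F.card - k := dvd_pow_sub l k h F.card (Finset.card_pos.2 hF)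
  have hdiv : l * ((k ^ F.card - k) / l) = k ^ F.card - k := Int.mul_ediv_cancel' hdvd
  have hprod : ∏ i ∈ F, (l * x i + k)
      = ∑ G ∈ F.powerset, l ^ G.card * k ^ (F.card - G.card) * ∏ i ∈ G, x i := by
    rw [Finset.prod_add]
    refine Finset.sum_congr rfl (fun G hG => ?_)
    rw [Finset.mem_powerset] at hG
    rw [Finset.prod_const, Finset.card_sdiff_of_subset hG, Finset.prod_mul_distrib, Finset.prod_const]
    ring
  have hsplit : ∑ G ∈ F.powerset, l ^ G.card * k ^ (F.card - G.card) * ∏ i ∈ G, x i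
      = (∑ G ∈ F.powerset.filter (fun G => G ≠ ∅),
          l ^ G.card * k ^ (F.card - G.card) * ∏ i ∈ G, x i) + k ^ F.card := by
    rw [← Finset.sum_filter_add_sum_filter_not F.powerset (fun G => G ≠ ∅)]
    congr 1
    have : F.powerset.filter (fun G => ¬ G ≠ ∅) = {∅} := by
      ext G
      simp [Finset.mem_filter, Finset.mem_powerset]
      rintro rfl; exact Finset.empty_subset F
    rw [this]
    simp
  have hmul : l * (∑ G ∈ F.powerset.filter (fun G => G ≠ ∅),
        l ^ (G.card - 1) * k ^ (F.card - G.card) * ∏ i ∈ G, x i)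
      = ∑ G ∈ F.powerset.filter (fun G => G ≠ ∅),
        l ^ G.card * k ^ (F.card - G.card) * ∏ i ∈ G, x i := by
    rw [Finset.mul_sum]
    refine Finset.sum_congr rfl (fun G hG => ?_)
    simp only [Finset.mem_filter] at hG
    have hc : 1 ≤ G.card := Finset.card_pos.2 (Finset.nonempty_iff_ne_empty.2 hG.2)
    have : l ^ G.card = l * l ^ (G.card - 1) := by
      rw [← pow_succ']
      congr 1
      omega
    rw [this]
    ring
  unfold symVal
  rw [hprod, hsplit, ← hmul]
  rw [mul_add, hdiv]
  ring

lemma symVal_zero_one (x : ℕ → ℤ) (F : Finset ℕ) : symVal 0 1 x F = ∑ i ∈ F, x i := by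
  unfold symVal
  simp only [one_pow, sub_self, Int.zero_ediv, add_zero, mul_one]
  have h1 : ∀ G ∈ F.powerset.filter (fun G => G ≠ ∅),
      (0:ℤ) ^ (G.card - 1) * ∏ i ∈ G, x i
        = if G.card = 1 then ∏ i ∈ G, x i else 0 := by
    intro G hG
    simp only [Finset.mem_filter, Finset.mem_powerset] at hG
    by_cases hc : G.card = 1
    · simp [hc]
    · have h2 : 1 ≤ G.card := Finset.card_pos.2 (Finset.nonempty_iff_ne_empty.2 hG.2)
      rw [if_neg hc, zero_pow (by omega)]
      ring
  rw [Finset.sum_congr rfl h1, ← Finset.sum_filter]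
  have h2 : (F.powerset.filter (fun G => G ≠ ∅)).filter (fun G => G.card = 1)
      = F.powersetCard 1 := by
    rw [Finset.powersetCard_eq_filter, Finset.filter_filter]
    congr 1
    ext G
    constructor
    · exact fun h => h.2
    · intro h; exact ⟨by rintro rfl; simp at h, h⟩
  rw [h2, Finset.powersetCard_one, Finset.sum_map]
  simp

lemma symVal_union (l k : ℤ) (x : ℕ → ℤ) (F G : Finset ℕ) (h : l ∣ k * k - k)
    (hk1 : l = 0 → k = 1) (hd : Disjoint F G) (hF : F.Nonempty) (hG : G.Nonempty) :
    symVal l k x (F ∪ G) = OPa l k (symVal l k x F) (symVal l k x G) := by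
  by_cases hl : l = 0
  · subst hl
    rw [hk1 rfl] at *
    rw [symVal_zero_one, symVal_zero_one, symVal_zero_one, Finset.sum_union hd]
    simp [OPa]
  · apply mul_left_cancel₀ hl
    have h1 := psi_symVal l k x (F ∪ G) h (hF.mono Finset.subset_union_left)
    have h2 := psi_symVal l k x F h hF
    have h3 := psi_symVal l k x G h hG
    have h4 := psi_OPa l k h (symVal l k x F) (symVal l k x G)
    have h5 : ∏ i ∈ F ∪ G, (l * x i + k) = (∏ i ∈ F, (l * x i + k)) * ∏ i ∈ G, (l * x i + k) :=
      Finset.prod_union hd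
    linear_combination h1 - h4 + h5 - (∏ i ∈ G, (l * x i + k)) * h2 - (l * symVal l k x F + k) * h3


open Filter

lemma exists_idem (o : ℤ → ℤ → ℤ) (hassoc : ∀ a b c, o (o a b) c = o a (o b c))
    (S : Set ℤ) (hScof : Sᶜ.Finite)
    (hSc : ∀ a ∈ S, ∀ b, b ∈ S → o a b ∈ S)
    (hSi : ∀ a ∈ S, ∀ B : Set ℤ, B.Finite → {b | o a b ∈ B}.Finite) :
    ∃ u : Ultrafilter ℤ,
      (∀ A : Set ℤ, A ∈ u → {x | {y | o x y ∈ A} ∈ u} ∈ u) ∧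
      (∀ A : Set ℤ, A ∈ u → A.Infinite) := by
  classical
  letI : Mul ℤ := ⟨o⟩
  letI : Semigroup ℤ := { mul := o, mul_assoc := hassoc }
  letI : Mul (Ultrafilter ℤ) := Ultrafilter.mul
  letI : Semigroup (Ultrafilter ℤ) := Ultrafilter.semigroup
  -- the compact subsemigroup
  let s : Set (Ultrafilter ℤ) := {u | S ∈ u ∧ ∀ B : Set ℤ, B.Finite → B ∉ u}
  have hs_closed : IsClosed s := by
    have : s = {u : Ultrafilter ℤ | S ∈ u} ∩ ⋂ B ∈ {B : Set ℤ | B.Finite}, {u : Ultrafilter ℤ | B ∈ u}ᶜ := by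
      ext u
      simp only [Set.mem_inter_iff, Set.mem_setOf_eq, Set.mem_iInter, Set.mem_compl_iff, s]
    rw [this]
    refine IsClosed.inter (ultrafilter_isClosed_basic S) ?_
    exact isClosed_biInter fun B _ => (ultrafilter_isOpen_basic B).isClosed_compl
  have hs_compact : IsCompact s := hs_closed.isCompact
  have hs_nonempty : s.Nonempty := by
    set u0 : Ultrafilter ℤ := Ultrafilter.of (Filter.cofinite : Filter ℤ) with hu0
    have hle : (u0 : Filter ℤ) ≤ (Filter.cofinite : Filter ℤ) := Ultrafilter.of_le _
    refine ⟨u0, ?_, ?_⟩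
    · exact hle (Filter.mem_cofinite.mpr hScof)
    · intro B hB hBu
      have h1 : Bᶜ ∈ u0 := hle (Filter.mem_cofinite.mpr (by simpa using hB))
      have h2 := Filter.inter_mem hBu h1
      rw [Set.inter_compl_self] at h2
      exact Filter.empty_notMem (u0 : Filter ℤ) h2
  have hs_mul : ∀ x ∈ s, ∀ y ∈ s, x * y ∈ s := by
    rintro u ⟨huS, huI⟩ v ⟨hvS, hvI⟩
    have hmem : ∀ (A : Set ℤ), A ∈ u * v ↔ {a | {b | o a b ∈ A} ∈ v} ∈ u := by
      intro A
      exact (Ultrafilter.eventually_mul u v (· ∈ A))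
    constructor
    · rw [hmem]
      refine Filter.mem_of_superset huS ?_
      intro a ha
      exact Filter.mem_of_superset hvS (fun b hb => hSc a ha b hb)
    · intro B hB hBuv
      rw [hmem] at hBuv
      have h1 : {a | {b | o a b ∈ B} ∈ v} ∩ S ∈ u := Filter.inter_mem hBuv huS
      obtain ⟨a, ha1, ha2⟩ := Ultrafilter.nonempty_of_mem h1
      exact hvI _ (hSi a ha2 B hB) ha1
  obtain ⟨u, hus, huu⟩ := exists_idempotent_in_compact_subsemigroup
    Ultrafilter.continuous_mul_left s hs_nonempty hs_compact hs_mul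
  refine ⟨u, ?_, ?_⟩
  · intro A hA
    have : A ∈ u * u := by rw [huu]; exact hA
    exact (Ultrafilter.eventually_mul u u (· ∈ A)).1 this
  · intro A hA
    by_contra hfin
    rw [Set.not_infinite] at hfin
    exact hus.2 A hfin hA

lemma OPa_zero_one (a b : ℤ) : OPa 0 1 a b = a + b := by simp [OPa]

lemma exists_idem_OPa (l k : ℤ) (h : l ∣ k * k - k) (hk1 : l = 0 → k = 1) :
    ∃ u : Ultrafilter ℤ,
      (∀ A : Set ℤ, A ∈ u → {x | {y | OPa l k x y ∈ A} ∈ u} ∈ u) ∧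
      (∀ A : Set ℤ, A ∈ u → A.Infinite) := by
  have hinj : ∀ a : ℤ, (l = 0 ∨ l * a + k ≠ 0) → Function.Injective (OPa l k a) := by
    intro a ha b b' hbb
    rcases eq_or_ne l 0 with hl | hl
    · subst hl
      rw [hk1 rfl] at hbb
      rw [OPa_zero_one, OPa_zero_one] at hbb
      omega
    · have hpsi := psi_OPa l k h
      have h1 : (l * a + k) * (l * b + k) = (l * a + k) * (l * b' + k) := by
        rw [← hpsi a b, ← hpsi a b', hbb]
      have ha' : l * a + k ≠ 0 := ha.resolve_left hl
      have h2 : l * b + k = l * b' + k := mul_left_cancel₀ ha' h1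
      have h3 : l * b = l * b' := by omega
      exact mul_left_cancel₀ hl h3
  apply exists_idem (OPa l k) (OPa_assoc l k h) {a | l = 0 ∨ l * a + k ≠ 0}
  · rcases eq_or_ne l 0 with hl | hl
    · have : {a : ℤ | l = 0 ∨ l * a + k ≠ 0}ᶜ = ∅ := by
        ext a; simp [hl]
      rw [this]; exact Set.finite_empty
    · apply Set.Subsingleton.finite
      intro a ha b hb
      simp only [Set.mem_compl_iff, Set.mem_setOf_eq, not_or, not_ne_iff] at ha hb
      have h1 : l * a = l * b := by omega
      exact mul_left_cancel₀ hl h1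
  · intro a ha b hb
    simp only [Set.mem_setOf_eq] at *
    rcases eq_or_ne l 0 with hl | hl
    · exact Or.inl hl
    · refine Or.inr ?_
      rw [psi_OPa l k h]
      exact mul_ne_zero (ha.resolve_left hl) (hb.resolve_left hl)
  · intro a ha B hB
    exact Set.Finite.preimage ((hinj a ha).injOn) hB


def Nest : List (Ultrafilter ℤ) → (List ℤ → Prop) → Prop
  | [], P => P []
  | q :: qs, P => {a | Nest qs fun v => P (a :: v)} ∈ q

lemma nest_mono : ∀ (qs : List (Ultrafilter ℤ)) (P P' : List ℤ → Prop),
    (∀ v, P v → P' v) → Nest qs P → Nest qs P' := by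
  intro qs
  induction qs with
  | nil => intro P P' h hP; exact h [] hP
  | cons q qs ih =>
    intro P P' h hP
    simp only [Nest] at *
    exact Filter.mem_of_superset hP (fun a ha => ih _ _ (fun v hv => h (a :: v) hv) ha)

lemma nest_iff (qs : List (Ultrafilter ℤ)) (P P' : List ℤ → Prop)
    (h : ∀ v, P v ↔ P' v) : Nest qs P ↔ Nest qs P' :=
  ⟨nest_mono qs P P' (fun v => (h v).1), nest_mono qs P' P (fun v => (h v).2)⟩

lemma uf_exists_fiber (u : Ultrafilter ℤ) (r : ℕ) (h : ℤ → Fin r) :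
    ∃ i, {a | h a = i} ∈ u := by
  by_contra hc
  push_neg at hc
  have h1 : ∀ i, {a | h a = i}ᶜ ∈ u := fun i => (Ultrafilter.compl_mem_iff_notMem).2 (hc i)
  have h2 : (⋂ i, {a : ℤ | h a = i}ᶜ) ∈ u := Filter.iInter_mem.2 h1
  have h3 : (⋂ i, {a : ℤ | h a = i}ᶜ) = ∅ := by ext a; simp
  rw [h3] at h2
  exact Filter.empty_notMem (u : Filter ℤ) h2

lemma nest_color (r : ℕ) (C : Fin r → Set ℤ) (hC : (⋃ i, C i) = Set.univ) :
    ∀ (qs : List (Ultrafilter ℤ)) (g : List ℤ → ℤ),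
    ∃ i : Fin r, Nest qs (fun v => g v ∈ C i) := by
  intro qs
  induction qs with
  | nil =>
    intro g
    have : g [] ∈ ⋃ i, C i := by rw [hC]; trivial
    obtain ⟨i, hi⟩ := Set.mem_iUnion.1 this
    exact ⟨i, hi⟩
  | cons q qs ih =>
    intro g
    have hr : ∀ a : ℤ, ∃ i : Fin r, Nest qs (fun v => g (a :: v) ∈ C i) :=
      fun a => ih (fun v => g (a :: v))
    choose h hh using hr
    obtain ⟨i, hi⟩ := uf_exists_fiber q r h
    refine ⟨i, ?_⟩
    show {a | Nest qs fun v => g (a :: v) ∈ C i} ∈ q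
    refine Filter.mem_of_superset hi ?_
    intro a ha
    simp only [Set.mem_setOf_eq] at ha ⊢
    rw [← ha]
    exact hh a


lemma starSet_subset (o : ℤ → ℤ → ℤ) (u : Ultrafilter ℤ) (B : Set ℤ) :
    starSet o u B ⊆ B := fun _ hx => hx.1

lemma starSet_mem (o : ℤ → ℤ → ℤ) (u : Ultrafilter ℤ)
    (hidem : ∀ A : Set ℤ, A ∈ u → {a | {b | o a b ∈ A} ∈ u} ∈ u)
    (B : Set ℤ) (hB : B ∈ u) : starSet o u B ∈ u := by
  have := Filter.inter_mem hB (hidem B hB)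
  refine Filter.mem_of_superset this ?_
  intro x hx
  exact ⟨hx.1, hx.2⟩

lemma starSet_step (o : ℤ → ℤ → ℤ) (u : Ultrafilter ℤ)
    (hassoc : ∀ a b c', o (o a b) c' = o a (o b c'))
    (hidem : ∀ A : Set ℤ, A ∈ u → {a | {b | o a b ∈ A} ∈ u} ∈ u)
    (B : Set ℤ) (hB : B ∈ u) (x : ℤ) (hx : x ∈ starSet o u B) :
    {y | o x y ∈ starSet o u B} ∈ u := by
  obtain ⟨hx1, hx2⟩ := hx
  have h2 : {y | {z | o y z ∈ {y' | o x y' ∈ B}} ∈ u} ∈ u := hidem _ hx2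
  have h3 := Filter.inter_mem hx2 h2
  refine Filter.mem_of_superset h3 ?_
  rintro y ⟨hy1, hy2⟩
  refine ⟨hy1, ?_⟩
  have : {z : ℤ | o y z ∈ {y' | o x y' ∈ B}} = {z | o (o x y) z ∈ B} := by
    ext z
    simp only [Set.mem_setOf_eq, hassoc]
  have hy2' : {z | o y z ∈ {y' | o x y' ∈ B}} ∈ u := hy2
  rw [this] at hy2'
  exact hy2'

structure Ctx where
  m : ℕ
  key : Fin m → ℤ × ℤ
  op : ℤ × ℤ → ℤ → ℤ → ℤ
  V : (ℤ × ℤ) → (ℕ → ℤ) → Finset ℕ → ℤ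
  p : (ℤ × ℤ) → Ultrafilter ℤ
  Q : List ℤ → Prop

namespace Ctx

variable (c : Ctx)

def ps : List (Ultrafilter ℤ) := List.ofFn (fun j => c.p (c.key j))

def valsTake (X : Fin c.m → ℕ → ℤ) (F : Fin c.m → Finset ℕ) (t : ℕ) : List ℤ :=
  (List.ofFn (fun j => c.V (c.key j) (X j) (F j))).take t

def BSet (j : Fin c.m) (a : List ℤ) : Set ℤ :=
  {b | Nest (c.ps.drop ((j : ℕ) + 1)) (fun v => c.Q (a ++ b :: v))}

def RP (t : ℕ) (a : List ℤ) : Prop := Nest (c.ps.drop t) (fun v => c.Q (a ++ v))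

def Adm (n : ℕ) (j : ℕ) (F : Fin c.m → Finset ℕ) : Prop :=
  (∀ t : Fin c.m, (t : ℕ) < j → (F t).Nonempty ∧ F t ⊆ Finset.range n) ∧
  (∀ t t' : Fin c.m, (t : ℕ) < (t' : ℕ) → (t' : ℕ) < j →
    ∀ a ∈ F t, ∀ b ∈ F t', a < b) ∧
  (∀ t : Fin c.m, j ≤ (t : ℕ) → F t = ∅)

def XT (T : ℕ → ℤ × ℤ → ℤ) (j : Fin c.m) : ℕ → ℤ := fun n => T n (c.key j)

def SReq (T : ℕ → ℤ × ℤ → ℤ) (n : ℕ) (j : Fin c.m) : Set ℤ :=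
  ⋂ F ∈ {F | c.Adm n (j : ℕ) F},
    starSet (c.op (c.key j)) (c.p (c.key j)) (c.BSet j (c.valsTake (c.XT T) F j))

def ECfg (n : ℕ) (j : Fin c.m) : Set ((Fin c.m → Finset ℕ) × Finset ℕ) :=
  {FG | c.Adm n (j : ℕ) FG.1 ∧ FG.2.Nonempty ∧ FG.2 ⊆ Finset.range n ∧
    (∀ t : Fin c.m, (t : ℕ) < (j : ℕ) → ∀ a ∈ FG.1 t, ∀ b ∈ FG.2, a < b)}

def EReq (T : ℕ → ℤ × ℤ → ℤ) (n : ℕ) (j : Fin c.m) : Set ℤ :=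
  ⋂ FG ∈ c.ECfg n j,
    {y | c.op (c.key j) (c.V (c.key j) (c.XT T j) FG.2) y ∈
      starSet (c.op (c.key j)) (c.p (c.key j)) (c.BSet j (c.valsTake (c.XT T) FG.1 j))}

def OldV (T : ℕ → ℤ × ℤ → ℤ) (n : ℕ) : Set ℤ :=
  {z | ∃ n' < n, ∃ j : Fin c.m, T n' (c.key j) = z}

def GoodSet (T : ℕ → ℤ × ℤ → ℤ) (n : ℕ) (κ : ℤ × ℤ) : Set ℤ :=
  (⋂ j ∈ {j : Fin c.m | c.key j = κ}, c.SReq T n j ∩ c.EReq T n j) \ c.OldV T n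

open Classical in
noncomputable def stepF (T : ℕ → ℤ × ℤ → ℤ) (n : ℕ) (κ : ℤ × ℤ) : ℤ :=
  if h : (c.GoodSet T n κ).Nonempty then h.some else 0

noncomputable def W : ℕ → ℤ × ℤ → ℤ
  | n, κ => c.stepF (fun n' κ' => if h : n' < n then W n' κ' else 0) n κ
  decreasing_by exact h

noncomputable def X (j : Fin c.m) : ℕ → ℤ := fun n => c.W n (c.key j)

lemma W_eq (n : ℕ) (κ : ℤ × ℤ) :
    c.W n κ = c.stepF (fun n' κ' => if _ : n' < n then c.W n' κ' else 0) n κ := by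
  rw [W]

lemma ps_length : c.ps.length = c.m := by simp [ps]

lemma ps_drop (j : Fin c.m) :
    c.ps.drop (j : ℕ) = c.p (c.key j) :: c.ps.drop ((j : ℕ) + 1) := by
  unfold ps
  rw [List.drop_eq_getElem_cons (by simp [j.2])]
  rw [List.getElem_ofFn]

lemma RP_iff (j : Fin c.m) (a : List ℤ) :
    c.RP (j : ℕ) a ↔ c.BSet j a ∈ c.p (c.key j) := by
  rw [RP, ps_drop]
  exact Iff.rfl

lemma mem_BSet (j : Fin c.m) (a : List ℤ) (b : ℤ) :
    b ∈ c.BSet j a ↔ c.RP ((j : ℕ) + 1) (a ++ [b]) := by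
  rw [BSet, RP]
  show Nest _ _ ↔ Nest _ _
  exact nest_iff _ _ _ (fun v => by rw [List.append_assoc]; exact Iff.rfl)

lemma valsTake_congr (X X' : Fin c.m → ℕ → ℤ) (F F' : Fin c.m → Finset ℕ) (t : ℕ)
    (h : ∀ s : Fin c.m, (s : ℕ) < t →
      c.V (c.key s) (X s) (F s) = c.V (c.key s) (X' s) (F' s)) :
    c.valsTake X F t = c.valsTake X' F' t := by
  apply List.ext_getElem
  · simp [valsTake]
  · intro i h1 h2
    simp only [valsTake] at h1 ⊢
    rw [List.getElem_take, List.getElem_take, List.getElem_ofFn, List.getElem_ofFn]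
    simp only [List.length_take, List.length_ofFn, lt_min_iff] at h1
    exact h _ h1.1

lemma valsTake_succ (X : Fin c.m → ℕ → ℤ) (F : Fin c.m → Finset ℕ) (t : ℕ) (ht : t < c.m) :
    c.valsTake X F (t + 1)
      = c.valsTake X F t ++ [c.V (c.key ⟨t, ht⟩) (X ⟨t, ht⟩) (F ⟨t, ht⟩)] := by
  rw [valsTake, valsTake, List.take_succ]
  congr 1
  rw [List.getElem?_eq_getElem (by simpa using ht), List.getElem_ofFn]
  rfl


lemma finite_adm (n : ℕ) (j : ℕ) : {F | c.Adm n j F}.Finite := by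
  have h1 : {F | c.Adm n j F} ⊆
      Set.pi Set.univ (fun _ : Fin c.m => {G : Finset ℕ | G ⊆ Finset.range n}) := by
    intro F hF
    intro t _
    by_cases ht : (t : ℕ) < j
    · exact (hF.1 t ht).2
    · rw [hF.2.2 t (by omega)]
      exact Finset.empty_subset _
  refine Set.Finite.subset (Set.Finite.pi (fun i => ?_)) h1
  have : {G : Finset ℕ | G ⊆ Finset.range n} = ↑(Finset.range n).powerset := by
    ext G; rw [Finset.mem_coe, Finset.mem_powerset]; exact Iff.rfl
  rw [this]
  exact (Finset.range n).powerset.finite_toSet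

lemma finite_ecfg (n : ℕ) (j : Fin c.m) : (c.ECfg n j).Finite := by
  have h1 : c.ECfg n j ⊆ {F | c.Adm n (j : ℕ) F} ×ˢ {G : Finset ℕ | G ⊆ Finset.range n} := by
    rintro ⟨F, G⟩ hFG
    exact ⟨hFG.1, hFG.2.2.1⟩
  refine Set.Finite.subset (Set.Finite.prod (c.finite_adm n j) ?_) h1
  have : {G : Finset ℕ | G ⊆ Finset.range n} = ↑(Finset.range n).powerset := by
    ext G; rw [Finset.mem_coe, Finset.mem_powerset]; exact Iff.rfl
  rw [this]
  exact (Finset.range n).powerset.finite_toSet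

lemma finite_oldv (T : ℕ → ℤ × ℤ → ℤ) (n : ℕ) : (c.OldV T n).Finite := by
  have h1 : c.OldV T n =
      (fun q : ℕ × Fin c.m => T q.1 (c.key q.2)) '' ({n' | n' < n} ×ˢ Set.univ) := by
    ext z
    simp only [OldV, Set.mem_setOf_eq, Set.mem_image, Set.mem_prod, Set.mem_univ, and_true,
      Prod.exists]
    constructor
    · rintro ⟨n', hn', j, hj⟩; exact ⟨n', j, hn', hj⟩
    · rintro ⟨n', j, hn', hj⟩; exact ⟨n', hn', j, hj⟩
  rw [h1]
  exact Set.Finite.image _ (Set.Finite.prod (Set.finite_Iio n) Set.finite_univ)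


lemma goodSet_congr
    (hVcongr : ∀ κ x y F, (∀ i ∈ F, x i = y i) → c.V κ x F = c.V κ y F)
    (T T' : ℕ → ℤ × ℤ → ℤ) (n : ℕ) (hT : ∀ n' < n, ∀ κ, T n' κ = T' n' κ) (κ : ℤ × ℤ) :
    c.GoodSet T n κ = c.GoodSet T' n κ := by
  have hvt : ∀ (j : Fin c.m) (F : Fin c.m → Finset ℕ), c.Adm n (j : ℕ) F →
      c.valsTake (c.XT T) F j = c.valsTake (c.XT T') F j := by
    intro j F hF
    apply c.valsTake_congr
    intro s hs
    apply hVcongr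
    intro i hi
    have hin : i < n := Finset.mem_range.1 ((hF.1 s hs).2 hi)
    exact hT i hin _
  have hS : ∀ j : Fin c.m, c.SReq T n j = c.SReq T' n j := by
    intro j
    unfold SReq
    apply Set.iInter_congr
    intro F
    apply Set.iInter_congr
    intro hF
    rw [hvt j F hF]
  have hE : ∀ j : Fin c.m, c.EReq T n j = c.EReq T' n j := by
    intro j
    unfold EReq
    apply Set.iInter_congr
    intro FG
    apply Set.iInter_congr
    intro hFG
    rw [hvt j FG.1 hFG.1]
    have : c.V (c.key j) (c.XT T j) FG.2 = c.V (c.key j) (c.XT T' j) FG.2 := by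
      apply hVcongr
      intro i hi
      have hin : i < n := Finset.mem_range.1 (hFG.2.2.1 hi)
      exact hT i hin _
    rw [this]
  have hO : c.OldV T n = c.OldV T' n := by
    unfold OldV
    ext z
    simp only [Set.mem_setOf_eq]
    constructor
    · rintro ⟨n', hn', j, hj⟩; exact ⟨n', hn', j, by rw [← hT n' hn']; exact hj⟩
    · rintro ⟨n', hn', j, hj⟩; exact ⟨n', hn', j, by rw [hT n' hn']; exact hj⟩
  unfold GoodSet
  rw [hO]
  congr 1
  apply Set.iInter_congr
  intro j
  apply Set.iInter_congr
  intro hj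
  rw [hS j, hE j]

lemma W_mem (hVcongr : ∀ κ x y F, (∀ i ∈ F, x i = y i) → c.V κ x F = c.V κ y F)
    (n : ℕ) (κ : ℤ × ℤ) (hne : (c.GoodSet c.W n κ).Nonempty) :
    c.W n κ ∈ c.GoodSet c.W n κ := by
  have heq := c.goodSet_congr hVcongr (fun n' κ' => if _ : n' < n then c.W n' κ' else 0)
    c.W n (fun n' hn' κ' => dif_pos hn') κ
  rw [c.W_eq n κ]
  unfold stepF
  rw [heq]
  rw [dif_pos hne]
  exact hne.some_mem


theorem construction
    (hassoc : ∀ j : Fin c.m, ∀ a b d,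
      c.op (c.key j) (c.op (c.key j) a b) d = c.op (c.key j) a (c.op (c.key j) b d))
    (hV1 : ∀ j : Fin c.m, ∀ x n, c.V (c.key j) x {n} = x n)
    (hV2 : ∀ j : Fin c.m, ∀ x F G, Disjoint F G → F.Nonempty → G.Nonempty →
      c.V (c.key j) x (F ∪ G) = c.op (c.key j) (c.V (c.key j) x F) (c.V (c.key j) x G))
    (hVcongr : ∀ κ x y F, (∀ i ∈ F, x i = y i) → c.V κ x F = c.V κ y F)
    (hidem : ∀ j : Fin c.m, ∀ A : Set ℤ, A ∈ c.p (c.key j) →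
      {a | {b | c.op (c.key j) a b ∈ A} ∈ c.p (c.key j)} ∈ c.p (c.key j))
    (hinf : ∀ j : Fin c.m, ∀ A : Set ℤ, A ∈ c.p (c.key j) → A.Infinite)
    (hQ : Nest c.ps c.Q) :
    (∀ j, Function.Injective (c.X j)) ∧
    (∀ j j', c.key j = c.key j' → c.X j = c.X j') ∧
    ∀ F : Fin c.m → Finset ℕ, (∀ j, (F j).Nonempty) →
      (∀ j j', j < j' → ∀ a ∈ F j, ∀ b ∈ F j', a < b) →
      c.Q (List.ofFn (fun j => c.V (c.key j) (c.X j) (F j))) := by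
  classical
  set INV : ℕ → Prop := fun n => ∀ (j : Fin c.m) (Fp : Fin c.m → Finset ℕ) (G : Finset ℕ),
    c.Adm n (j : ℕ) Fp → G.Nonempty → G ⊆ Finset.range n →
    (∀ t : Fin c.m, (t : ℕ) < (j : ℕ) → ∀ a ∈ Fp t, ∀ b ∈ G, a < b) →
    c.V (c.key j) (c.X j) G ∈
      starSet (c.op (c.key j)) (c.p (c.key j)) (c.BSet j (c.valsTake c.X Fp j))
    with hINVdef
  -- the chain lemma
  have GC : ∀ n, INV n → ∀ (t : ℕ), t ≤ c.m → ∀ (F : Fin c.m → Finset ℕ),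
      (∀ s : Fin c.m, (s : ℕ) < t → (F s).Nonempty ∧ F s ⊆ Finset.range n) →
      (∀ s s' : Fin c.m, (s : ℕ) < (s' : ℕ) → (s' : ℕ) < t → ∀ a ∈ F s, ∀ b ∈ F s', a < b) →
      c.RP t (c.valsTake c.X F t) := by
    intro n hINV t
    induction t with
    | zero =>
      intro _ F _ _
      show c.RP 0 _
      unfold RP valsTake
      rw [List.take_zero, List.drop_zero]
      exact hQ
    | succ t iht =>
      intro ht F h1 h2
      have htm : t < c.m := by omega
      set jt : Fin c.m := ⟨t, htm⟩ with hjt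
      have hIH : c.RP t (c.valsTake c.X F t) := by
        refine iht (by omega) F (fun s hs => h1 s (by omega)) ?_
        intro s s' hss' hs'
        exact h2 s s' hss' (by omega)
      set Fp : Fin c.m → Finset ℕ := fun s => if (s : ℕ) < t then F s else ∅ with hFp
      have hAdm : c.Adm n t Fp := by
        refine ⟨?_, ?_, ?_⟩
        · intro s hs
          simp only [hFp, if_pos hs]
          exact h1 s (by omega)
        · intro s s' hss' hs'
          simp only [hFp, if_pos (show (s:ℕ) < t by omega), if_pos hs']
          exact h2 s s' hss' (by omega)
        · intro s hs
          have hns : ¬ ((s:ℕ) < t) := by omega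
          simp only [hFp, if_neg hns]
      have hstar := hINV jt Fp (F jt) hAdm (h1 jt (Nat.lt_succ_self t)).1 (h1 jt (Nat.lt_succ_self t)).2 ?_
      · have hvt : c.valsTake c.X Fp (jt : ℕ) = c.valsTake c.X F t := by
          apply c.valsTake_congr
          intro s hs
          simp only [hFp]
          rw [if_pos (by exact hs)]
        rw [hvt] at hstar
        have hB := starSet_subset _ _ _ hstar
        rw [c.mem_BSet jt] at hB
        have hvs := c.valsTake_succ c.X F t htm
        rw [hvs]
        exact hB
      · intro s hs a ha b hb
        simp only [hFp, if_pos hs] at ha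
        rw [if_pos (show (s:ℕ) < t from hs)] at ha
        exact h2 s jt hs (Nat.lt_succ_self t) a ha b hb
  -- requirement sets are large
  have hreq : ∀ n, INV n → ∀ j : Fin c.m,
      c.SReq c.W n j ∈ c.p (c.key j) ∧ c.EReq c.W n j ∈ c.p (c.key j) := by
    intro n hINV j
    have hXT : c.XT c.W = c.X := rfl
    have hBmem : ∀ F : Fin c.m → Finset ℕ, c.Adm n (j : ℕ) F →
        c.BSet j (c.valsTake (c.XT c.W) F (j : ℕ)) ∈ c.p (c.key j) := by
      intro F hF
      rw [hXT]
      have hrp := GC n hINV (j : ℕ) (le_of_lt j.2) F (fun s hs => hF.1 s hs) hF.2.1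
      exact (c.RP_iff j _).1 hrp
    constructor
    · unfold SReq
      refine (Filter.biInter_mem (c.finite_adm n (j : ℕ))).2 ?_
      intro F hF
      exact starSet_mem _ _ (hidem j) _ (hBmem F hF)
    · unfold EReq
      refine (Filter.biInter_mem (c.finite_ecfg n j)).2 ?_
      rintro ⟨F, G⟩ hFG
      obtain ⟨hF, hGne, hGr, hcr⟩ := hFG
      have hstar : c.V (c.key j) (c.XT c.W j) G ∈
          starSet (c.op (c.key j)) (c.p (c.key j)) (c.BSet j (c.valsTake (c.XT c.W) F (j:ℕ))) := by
        rw [hXT]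
        exact hINV j F G hF hGne hGr hcr
      exact starSet_step _ _ (hassoc j) (hidem j) _ (hBmem F hF) _ hstar
  -- goodsets are nonempty
  have hgood : ∀ n, INV n → ∀ j0 : Fin c.m, (c.GoodSet c.W n (c.key j0)).Nonempty := by
    intro n hINV j0
    have hmem : (⋂ j ∈ {j : Fin c.m | c.key j = c.key j0}, c.SReq c.W n j ∩ c.EReq c.W n j)
        ∈ c.p (c.key j0) := by
      refine (Filter.biInter_mem (Set.toFinite _)).2 ?_
      intro j hj
      have h1 := hreq n hINV j
      have h2 : c.SReq c.W n j ∩ c.EReq c.W n j ∈ c.p (c.key j) := Filter.inter_mem h1.1 h1.2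
      rwa [hj] at h2
    exact ((hinf j0 _ hmem).diff (c.finite_oldv c.W n)).nonempty
  -- master induction
  have hINVall : ∀ n, INV n := by
    intro n
    induction n with
    | zero =>
      intro j Fp G _ hG hGr _
      exfalso
      obtain ⟨g, hg⟩ := hG
      have := hGr hg
      simp at this
    | succ n ihn =>
      intro j Fp G hAdm hG hGr hcross
      by_cases hn : n ∈ G
      · -- the new element is used
        have hFpr : c.Adm n (j : ℕ) Fp := by
          refine ⟨?_, hAdm.2.1, hAdm.2.2⟩
          intro t ht
          refine ⟨(hAdm.1 t ht).1, ?_⟩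
          intro a ha
          have h4 := hcross t ht a ha n hn
          exact Finset.mem_range.2 h4
        have hWn := c.W_mem hVcongr n (c.key j) (hgood n ihn j)
        have hmem2 : c.W n (c.key j) ∈ c.SReq c.W n j ∩ c.EReq c.W n j :=
          Set.mem_iInter₂.1 hWn.1 j rfl
        have hXT : c.XT c.W = c.X := rfl
        have hXjn : c.W n (c.key j) = c.X j n := rfl
        set G' := G.erase n with hG'def
        by_cases hG' : G'.Nonempty
        · -- extend an existing partial block
          have hG'r : G' ⊆ Finset.range n := by
            intro a ha
            have h5 := Finset.mem_of_mem_erase ha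
            have h6 := Finset.ne_of_mem_erase ha
            have h7 := Finset.mem_range.1 (hGr h5)
            exact Finset.mem_range.2 (by omega)
          have hcfg : (Fp, G') ∈ c.ECfg n j := by
            refine ⟨hFpr, hG', hG'r, ?_⟩
            intro t ht a ha b hb
            exact hcross t ht a ha b (Finset.mem_of_mem_erase hb)
          have h6 := Set.mem_iInter₂.1 hmem2.2 (Fp, G') hcfg
          have hGu : G = G' ∪ {n} := by
            rw [hG'def, Finset.union_comm, ← Finset.insert_eq, Finset.insert_erase hn]
          have hVG : c.V (c.key j) (c.X j) G
              = c.op (c.key j) (c.V (c.key j) (c.X j) G') (c.X j n) := by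
            rw [hGu, hV2 j _ G' {n} (by simp [hG'def]) hG' (Finset.singleton_nonempty n),
              hV1 j _ n]
          rw [hVG]
          exact h6
        · -- start a new block
          have hGn : G = {n} := by
            apply Finset.eq_singleton_iff_unique_mem.2
            refine ⟨hn, ?_⟩
            intro a ha
            by_contra hne
            exact hG' ⟨a, Finset.mem_erase.2 ⟨hne, ha⟩⟩
          have h5 := Set.mem_iInter₂.1 hmem2.1 Fp hFpr
          rw [hGn, hV1 j _ n]
          exact h5
      · -- the new element is not used
        have hGr' : G ⊆ Finset.range n := by
          intro a ha
          have h4 := Finset.mem_range.1 (hGr ha)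
          have : a ≠ n := fun h => hn (h ▸ ha)
          exact Finset.mem_range.2 (by omega)
        have hAdm' : c.Adm n (j : ℕ) Fp := by
          refine ⟨?_, hAdm.2.1, hAdm.2.2⟩
          intro t ht
          refine ⟨(hAdm.1 t ht).1, ?_⟩
          intro a ha
          obtain ⟨g, hg⟩ := hG
          have h4 := hcross t ht a ha g hg
          have h5 := Finset.mem_range.1 (hGr' hg)
          exact Finset.mem_range.2 (by omega)
        exact ihn j Fp G hAdm' hG hGr' hcross
  -- conclusions
  refine ⟨?_, ?_, ?_⟩
  · -- injectivity
    intro j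
    have hkey : ∀ a b : ℕ, a < b → c.X j a ≠ c.X j b := by
      intro a b hab heq
      have hWb := c.W_mem hVcongr b (c.key j) (hgood b (hINVall b) j)
      exact hWb.2 ⟨a, hab, j, heq⟩
    intro a b heq
    rcases lt_trichotomy a b with h | h | h
    · exact absurd heq (hkey a b h)
    · exact h
    · exact absurd heq.symm (hkey b a h)
  · intro j j' hk
    funext n
    show c.W n (c.key j) = c.W n (c.key j')
    rw [hk]
  · intro F hFne hFincr
    set N := (Finset.univ.sup (fun j => (F j).sup id)) + 1 with hN
    have hFr : ∀ j, F j ⊆ Finset.range N := by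
      intro j a ha
      have h1 : a ≤ (F j).sup id := Finset.le_sup (f := id) ha
      have h2 : (F j).sup id ≤ Finset.univ.sup (fun j => (F j).sup id) :=
        Finset.le_sup (f := fun j => (F j).sup id) (Finset.mem_univ j)
      exact Finset.mem_range.2 (by omega)
    have hRP := GC N (hINVall N) c.m le_rfl F (fun s _ => ⟨hFne s, hFr s⟩)
      (fun s s' hss' _ => hFincr s s' hss')
    unfold RP at hRP
    have hdropm : c.ps.drop c.m = [] := by
      rw [← c.ps_length]
      exact List.drop_length
    rw [hdropm] at hRP
    have hvm : c.valsTake c.X F c.m = List.ofFn (fun j => c.V (c.key j) (c.X j) (F j)) := by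
      unfold valsTake
      rw [List.take_of_length_le (by simp)]
    rw [hvm] at hRP
    have : Nest [] (fun v => c.Q (List.ofFn (fun j => c.V (c.key j) (c.X j) (F j)) ++ v)) =
        c.Q (List.ofFn (fun j => c.V (c.key j) (c.X j) (F j)) ++ []) := rfl
    rw [this, List.append_nil] at hRP
    exact hRP

end Ctx

end MT15

/-- Milliken–Taylor-type theorem for symmetric systems on ℤ. -/
theorem milliken_taylor_type_int (m : ℕ) (l k : Fin m → ℤ)
    (h : ∀ j, (l j ≠ 0 ∧ l j ∣ k j * (k j - 1)) ∨ (l j = 0 ∧ k j = 1))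
    (f : (Fin m → ℤ) → ℤ) (r : ℕ) (C : Fin r → Set ℤ)
    (hC : (⋃ i, C i) = (Set.univ : Set ℤ)) :
    ∃ x : Fin m → ℕ → ℤ,
      (∀ j, Function.Injective (x j)) ∧
      (∀ j j', l j = l j' → k j = k j' → x j = x j') ∧
      ∃ i : Fin r, ∀ F : Fin m → Finset ℕ,
        (∀ j, (F j).Nonempty) →
        (∀ j j', j < j' → ∀ a ∈ F j, ∀ b ∈ F j', a < b) →
        f (fun j => symVal (l j) (k j) (x j) (F j)) ∈ C i := by
  classical
  have hdvd : ∀ j, l j ∣ k j * k j - k j := by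
    intro j
    have h2 : k j * (k j - 1) = k j * k j - k j := by ring
    rcases h j with ⟨_, hd⟩ | ⟨h0, h1'⟩
    · rwa [h2] at hd
    · rw [h0, h1']; norm_num
  have hk1 : ∀ j, l j = 0 → k j = 1 := by
    intro j h0
    rcases h j with ⟨hne, _⟩ | ⟨_, h1'⟩
    · exact absurd h0 hne
    · exact h1'
  have hPex : ∀ κ : ℤ × ℤ, ∃ u : Ultrafilter ℤ,
      ((κ.1 ∣ κ.2 * κ.2 - κ.2) ∧ (κ.1 = 0 → κ.2 = 1)) →
      ((∀ A : Set ℤ, A ∈ u → {x | {y | MT15.OPa κ.1 κ.2 x y ∈ A} ∈ u} ∈ u) ∧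
       (∀ A : Set ℤ, A ∈ u → A.Infinite)) := by
    intro κ
    by_cases hv : (κ.1 ∣ κ.2 * κ.2 - κ.2) ∧ (κ.1 = 0 → κ.2 = 1)
    · obtain ⟨u, hu⟩ := MT15.exists_idem_OPa κ.1 κ.2 hv.1 hv.2
      exact ⟨u, fun _ => hu⟩
    · exact ⟨pure 0, fun hv' => absurd hv' hv⟩
  choose P hP using hPex
  obtain ⟨i₀, hi₀⟩ := MT15.nest_color r C hC (List.ofFn (fun j => P (l j, k j)))
      (fun v => f (fun j => v.getD (j : ℕ) 0))
  let c : MT15.Ctx := {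
    m := m
    key := fun j => (l j, k j)
    op := fun κ => MT15.OPa κ.1 κ.2
    V := fun κ => symVal κ.1 κ.2
    p := P
    Q := fun v => f (fun j => v.getD (j : ℕ) 0) ∈ C i₀ }
  have hcon := c.construction
    (fun j a b d => MT15.OPa_assoc (l j) (k j) (hdvd j) a b d)
    (fun j x n => MT15.symVal_singleton (l j) (k j) x n)
    (fun j x F G hd hF hG => MT15.symVal_union (l j) (k j) x F G (hdvd j) (hk1 j) hd hF hG)
    (fun κ x y F hxy => MT15.symVal_congr κ.1 κ.2 x y F hxy)
    (fun j => (hP (l j, k j) ⟨hdvd j, hk1 j⟩).1)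
    (fun j => (hP (l j, k j) ⟨hdvd j, hk1 j⟩).2)
    hi₀
  obtain ⟨hinj, heqk, hmono⟩ := hcon
  refine ⟨c.X, hinj, ?_, i₀, ?_⟩
  · intro j j' h1 h2
    exact heqk j j' (by rw [Prod.mk.injEq]; exact ⟨h1, h2⟩)
  · intro F h1 h2
    have h3 := hmono F h1 h2
    have h4 : (fun j : Fin m =>
        (List.ofFn (fun j' : Fin m => symVal (l j') (k j') (c.X j') (F j'))).getD (j : ℕ) 0)
        = fun j : Fin m => symVal (l j) (k j) (c.X j) (F j) := by
      funext j
      rw [List.getD_eq_getElem _ _ (by simp [j.2]), List.getElem_ofFn]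
    show f (fun j => symVal (l j) (k j) (c.X j) (F j)) ∈ C i₀
    rw [← h4]
    exact h3
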